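/- Let A be a σ-algebra, m : A → [0,∞) null-additive, monotone, and finitely purely atomic, and suppose m is such that every atom restricted measure is as above. Then every bounded measurable function f : T → ℝ is Gould m-integrable and m-totally-measurable on T. -/

import Mathlib

open Set ENNReal

variable {T : Type*}

/-- `𝒜` is an algebra of subsets of `T`. -/
def IsSetAlgebra' (𝒜 : Set (Set T)) : Prop :=
  ∅ ∈ 𝒜 ∧ (∀ A ∈ 𝒜, Aᶜ ∈ 𝒜) ∧ ∀ A ∈ 𝒜, ∀ B ∈ 𝒜, A ∪ B ∈ 𝒜

/-- `m` is monotone on `𝒜`. -/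
def MonoSF (m : Set T → ℝ) (𝒜 : Set (Set T)) : Prop :=
  ∀ A ∈ 𝒜, ∀ B ∈ 𝒜, A ⊆ B → m A ≤ m B

/-- `m` is subadditive on `𝒜`. -/
def SubaddSF (m : Set T → ℝ) (𝒜 : Set (Set T)) : Prop :=
  ∀ A ∈ 𝒜, ∀ B ∈ 𝒜, m (A ∪ B) ≤ m A + m B

/-- `m` is null-additive on `𝒜`. -/
def NullAddSF (m : Set T → ℝ) (𝒜 : Set (Set T)) : Prop :=
  ∀ A ∈ 𝒜, ∀ B ∈ 𝒜, m B = 0 → m (A ∪ B) = m A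

/-- `m` is finitely additive on `𝒜`. -/
def FinAddSF (m : Set T → ℝ) (𝒜 : Set (Set T)) : Prop :=
  ∀ A ∈ 𝒜, ∀ B ∈ 𝒜, Disjoint A B → m (A ∪ B) = m A + m B

/-- The variation `m̄` of `m`: supremum of `Σᵢ m(Aᵢ)` over finite pairwise disjoint
families `{Aᵢ} ⊆ 𝒜` with each `Aᵢ ⊆ E`. -/
noncomputable def variationSF (m : Set T → ℝ) (𝒜 : Set (Set T)) (E : Set T) : ℝ≥0∞ :=
  ⨆ F ∈ {F : Finset (Set T) |
      (∀ A ∈ F, A ∈ 𝒜 ∧ A ⊆ E) ∧ (F : Set (Set T)).PairwiseDisjoint id},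
    ∑ A ∈ F, ENNReal.ofReal (m A)

/-- `A` is an atom of `m`. -/
def IsAtomOf (m : Set T → ℝ) (𝒜 : Set (Set T)) (A : Set T) : Prop :=
  A ∈ 𝒜 ∧ 0 < m A ∧ ∀ B ∈ 𝒜, B ⊆ A → m B = 0 ∨ m (A \ B) = 0

/-- A partition of `A` into nonvoid pairwise disjoint members of `𝒜`. -/
def IsPartitionOf (𝒜 : Set (Set T)) (A : Set T) (P : Finset (Set T)) : Prop :=
  (∀ B ∈ P, B ∈ 𝒜 ∧ B.Nonempty ∧ B ⊆ A) ∧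
  (P : Set (Set T)).PairwiseDisjoint id ∧ ⋃₀ (P : Set (Set T)) = A

/-- `Q` is finer than `P`. -/
def RefinesPart (P Q : Finset (Set T)) : Prop := ∀ B ∈ Q, ∃ C ∈ P, B ⊆ C

/-- `f` is `m`-totally-measurable on `B`. -/
def TotallyMeasurableOn {X : Type*} [NormedAddCommGroup X] (m : Set T → ℝ)
    (𝒜 : Set (Set T)) (f : T → X) (B : Set T) : Prop :=
  ∀ ε > 0, ∃ A₀ : Set T, ∃ F : Finset (Set T),
    A₀ ∈ 𝒜 ∧ A₀ ⊆ B ∧ (∀ C ∈ F, C ∈ 𝒜 ∧ C.Nonempty ∧ C ⊆ B) ∧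
    (insert A₀ (F : Set (Set T))).PairwiseDisjoint id ∧
    A₀ ∪ ⋃₀ (F : Set (Set T)) = B ∧
    variationSF m 𝒜 A₀ < ENNReal.ofReal ε ∧
    ∀ C ∈ F, ∀ t ∈ C, ∀ s ∈ C, ‖f t - f s‖ < ε

variable {X : Type*} [NormedAddCommGroup X] [NormedSpace ℝ X]

/-- `f` has Gould integral `α` on `A` w.r.t. `m`: the net of Riemann sums
`σ(P) = Σ_{B ∈ P} m(B) • f(t_B)` over tagged partitions of `A`, ordered by
refinement, converges to `α`. -/
def HasGouldIntegralOn (m : Set T → ℝ) (𝒜 : Set (Set T)) (f : T → X) (A : Set T)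
    (α : X) : Prop :=
  ∀ ε > 0, ∃ P₀, IsPartitionOf 𝒜 A P₀ ∧ ∀ P, IsPartitionOf 𝒜 A P → RefinesPart P₀ P →
    ∀ τ : Set T → T, (∀ B ∈ P, τ B ∈ B) →
      ‖(∑ B ∈ P, m B • f (τ B)) - α‖ < ε

/-- `f` is Gould `m`-integrable on `A`. -/
def GouldIntegrableOn (m : Set T → ℝ) (𝒜 : Set (Set T)) (f : T → X) (A : Set T) : Prop :=
  ∃ α, HasGouldIntegralOn m 𝒜 f A α

section Helpers

variable {T : Type*} [MeasurableSpace T]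

lemma null_sUnion (m : Set T → ℝ) (h0 : m ∅ = 0)
    (hnull : NullAddSF m {s : Set T | MeasurableSet s})
    (Q : Finset (Set T)) (hQ : ∀ B ∈ Q, MeasurableSet B ∧ m B = 0) :
    MeasurableSet (⋃₀ (Q : Set (Set T))) ∧ m (⋃₀ (Q : Set (Set T))) = 0 := by
  classical
  induction Q using Finset.induction_on with
  | empty =>
    rw [Finset.coe_empty, Set.sUnion_empty]
    exact ⟨MeasurableSet.empty, h0⟩
  | @insert B Q' hBQ' ih =>
    have hmem : ∀ C ∈ Q', MeasurableSet C ∧ m C = 0 := fun C hC =>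
      hQ C (Finset.mem_insert_of_mem hC)
    have hBp := hQ B (Finset.mem_insert_self B Q')
    obtain ⟨h1, h2⟩ := ih hmem
    rw [Finset.coe_insert, Set.sUnion_insert]
    refine ⟨hBp.1.union h1, ?_⟩
    rw [Set.union_comm, hnull _ h1 _ hBp.1 hBp.2, h2]

/-- The essential value of `f` on an atom `A`. -/
noncomputable def essVal (m : Set T → ℝ) (f : T → ℝ) (A : Set T) : ℝ :=
  sSup {u : ℝ | m ({t | f t < u} ∩ A) = 0}

/-- Around the essential value. -/
noncomputable def Gset (m : Set T → ℝ) (f : T → ℝ) (δ : ℝ) (A : Set T) : Set T :=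
  A ∩ {t | essVal m f A - δ < f t ∧ f t < essVal m f A + δ}

lemma Gset_subset (m : Set T → ℝ) (f : T → ℝ) (δ : ℝ) (A : Set T) :
    Gset m f δ A ⊆ A := Set.inter_subset_left

lemma Gset_props (m : Set T → ℝ) (h0 : m ∅ = 0)
    (hpos : ∀ A : Set T, MeasurableSet A → 0 ≤ m A)
    (hnull : NullAddSF m {s : Set T | MeasurableSet s})
    (hmono : MonoSF m {s : Set T | MeasurableSet s})
    {A : Set T} (hA : IsAtomOf m {s : Set T | MeasurableSet s} A)
    {f : T → ℝ} (hf : Measurable f) {M : ℝ} (hM : ∀ t, |f t| ≤ M)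
    {δ : ℝ} (hδ : 0 < δ) :
    MeasurableSet (Gset m f δ A) ∧ (Gset m f δ A).Nonempty ∧
    m (Gset m f δ A) = m A ∧ MeasurableSet (A \ Gset m f δ A) ∧ m (A \ Gset m f δ A) = 0 ∧
    ∀ t ∈ Gset m f δ A, |f t - essVal m f A| < δ := by
  obtain ⟨hAmeas, hApos, hAatom⟩ := hA
  set c := essVal m f A with hc
  have hmeasu : ∀ u : ℝ, MeasurableSet ({t | f t < u} ∩ A) := fun u =>
    (hf measurableSet_Iio).inter hAmeas
  have hSne : (-M) ∈ {u : ℝ | m ({t | f t < u} ∩ A) = 0} := by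
    have he : {t | f t < -M} ∩ A = ∅ := by
      ext t
      simp only [Set.mem_inter_iff, Set.mem_setOf_eq, Set.mem_empty_iff_false, iff_false,
        not_and]
      intro h1
      have := (abs_le.mp (hM t)).1; intro _; linarith
    simp only [Set.mem_setOf_eq, he, h0]
  have hSbdd : ∀ u ∈ {u : ℝ | m ({t | f t < u} ∩ A) = 0}, u ≤ M := by
    intro u hu
    by_contra h
    push_neg at h
    have he : {t | f t < u} ∩ A = A := by
      apply Set.inter_eq_self_of_subset_right
      intro t _
      have := (abs_le.mp (hM t)).2
      simp only [Set.mem_setOf_eq]; linarith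
    rw [Set.mem_setOf_eq, he] at hu
    exact absurd hu (ne_of_gt hApos)
  have ha : ∀ u : ℝ, u < c → m ({t | f t < u} ∩ A) = 0 := by
    intro u hu
    obtain ⟨u', hu'S, huu'⟩ := exists_lt_of_lt_csSup ⟨-M, hSne⟩ hu
    have hsub : {t | f t < u} ∩ A ⊆ {t | f t < u'} ∩ A :=
      Set.inter_subset_inter_left _ (fun t ht => lt_trans ht huu')
    have h1 := hmono _ (hmeasu u) _ (hmeasu u') hsub
    have h2 := hpos _ (hmeasu u)
    rw [Set.mem_setOf_eq] at hu'S
    linarith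
  have hb : ∀ u : ℝ, c < u → m (A ∩ {t | u ≤ f t}) = 0 := by
    intro u hu
    have huS : u ∉ {u : ℝ | m ({t | f t < u} ∩ A) = 0} := fun h =>
      absurd (le_csSup ⟨M, hSbdd⟩ h) (not_le.mpr hu)
    rw [Set.mem_setOf_eq] at huS
    rcases hAatom _ (hmeasu u) Set.inter_subset_right with h | h
    · exact absurd h huS
    · have he : A \ ({t | f t < u} ∩ A) = A ∩ {t | u ≤ f t} := by
        ext t; by_cases ht : t ∈ A <;> simp [ht, not_lt]
      rw [he] at h; exact h
  have hN1 : m (A ∩ {t | f t ≤ c - δ}) = 0 := by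
    have hsub : A ∩ {t | f t ≤ c - δ} ⊆ {t | f t < c - δ/2} ∩ A := by
      rintro t ⟨h1, h2⟩
      rw [Set.mem_setOf_eq] at h2
      exact ⟨by rw [Set.mem_setOf_eq]; linarith, h1⟩
    have hm1 : MeasurableSet (A ∩ {t | f t ≤ c - δ}) := hAmeas.inter (hf measurableSet_Iic)
    have h1 := hmono _ hm1 _ (hmeasu _) hsub
    have h2 := hpos _ hm1
    have h3 := ha (c - δ/2) (by linarith)
    linarith
  have hN2 : m (A ∩ {t | c + δ ≤ f t}) = 0 := hb _ (by linarith)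
  have hNmeas1 : MeasurableSet (A ∩ {t | f t ≤ c - δ}) := hAmeas.inter (hf measurableSet_Iic)
  have hNmeas2 : MeasurableSet (A ∩ {t | c + δ ≤ f t}) := hAmeas.inter (hf measurableSet_Ici)
  have hNeq : A \ Gset m f δ A = (A ∩ {t | f t ≤ c - δ}) ∪ (A ∩ {t | c + δ ≤ f t}) := by
    rw [Gset, Set.diff_self_inter, ← hc]
    ext t
    simp only [Set.mem_diff, Set.mem_inter_iff, Set.mem_setOf_eq, Set.mem_union]
    constructor
    · rintro ⟨ht, hn⟩
      rcases lt_or_ge (c - δ) (f t) with h1 | h1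
      · rcases lt_or_ge (f t) (c + δ) with h2 | h2
        · exact absurd ⟨h1, h2⟩ hn
        · exact Or.inr ⟨ht, h2⟩
      · exact Or.inl ⟨ht, h1⟩
    · rintro (⟨ht, h1⟩ | ⟨ht, h1⟩) <;> exact ⟨ht, by rintro ⟨h2, h3⟩; linarith⟩
  have hNnull : m (A \ Gset m f δ A) = 0 := by
    rw [hNeq, hnull _ hNmeas1 _ hNmeas2 hN2]; exact hN1
  have hNmeas : MeasurableSet (A \ Gset m f δ A) := by
    rw [hNeq]; exact hNmeas1.union hNmeas2
  have hGmeas : MeasurableSet (Gset m f δ A) := hAmeas.inter (hf measurableSet_Ioo)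
  have hGm : m (Gset m f δ A) = m A := by
    have h1 := hnull _ hGmeas _ hNmeas hNnull
    rw [Set.union_diff_cancel (Gset_subset m f δ A)] at h1
    exact h1.symm
  refine ⟨hGmeas, ?_, hGm, hNmeas, hNnull, ?_⟩
  · rw [Set.nonempty_iff_ne_empty]
    intro h
    rw [h, h0] at hGm
    exact absurd hGm.symm (ne_of_gt hApos)
  · rintro t ⟨_, h1, h2⟩
    rw [abs_lt]; constructor <;> [linarith; linarith]

lemma atom_partition (m : Set T → ℝ) (h0 : m ∅ = 0)
    (hpos : ∀ A : Set T, MeasurableSet A → 0 ≤ m A)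
    (hnull : NullAddSF m {s : Set T | MeasurableSet s})
    (hmono : MonoSF m {s : Set T | MeasurableSet s})
    {A : Set T} (hA : IsAtomOf m {s : Set T | MeasurableSet s} A)
    {Q : Finset (Set T)} (hQmeas : ∀ B ∈ Q, MeasurableSet B)
    (hQdisj : (Q : Set (Set T)).PairwiseDisjoint id)
    (hQsub : ∀ B ∈ Q, B ⊆ A) (hQcov : ⋃₀ (Q : Set (Set T)) = A) :
    ∃ B ∈ Q, m B = m A ∧ ∀ B' ∈ Q, B' ≠ B → m B' = 0 := by
  obtain ⟨hAmeas, hApos, hAatom⟩ := hA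
  by_cases hex : ∃ B ∈ Q, m B ≠ 0
  · obtain ⟨B, hBQ, hBne⟩ := hex
    have hdiff : m (A \ B) = 0 := by
      rcases hAatom B (hQmeas B hBQ) (hQsub B hBQ) with h | h
      · exact absurd h hBne
      · exact h
    have hBA : m B = m A := by
      have h1 := hnull B (hQmeas B hBQ) (A \ B) (hAmeas.diff (hQmeas B hBQ)) hdiff
      rw [Set.union_diff_cancel (hQsub B hBQ)] at h1
      exact h1.symm
    refine ⟨B, hBQ, hBA, fun B' hB' hne => ?_⟩
    have hd : Disjoint B' B := hQdisj (Finset.mem_coe.mpr hB') (Finset.mem_coe.mpr hBQ) hne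
    have hsub : B' ⊆ A \ B := Set.subset_diff.mpr ⟨hQsub B' hB', hd⟩
    have h1 := hmono B' (hQmeas B' hB') (A \ B) (hAmeas.diff (hQmeas B hBQ)) hsub
    have h2 := hpos B' (hQmeas B' hB')
    linarith
  · push_neg at hex
    exfalso
    have h := (null_sUnion m h0 hnull Q (fun B hB => ⟨hQmeas B hB, hex B hB⟩)).2
    rw [hQcov] at h
    exact absurd h (ne_of_gt hApos)

end Helpers

/-- On a finitely purely atomic σ-algebra space with null-additive monotone `m`,
every bounded measurable real function is Gould integrable and totally
measurable on `T`. -/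
theorem bounded_measurable_gould_integrable [MeasurableSpace T] (m : Set T → ℝ)
    (h0 : m ∅ = 0) (hpos : ∀ A : Set T, MeasurableSet A → 0 ≤ m A)
    (hnull : NullAddSF m {s : Set T | MeasurableSet s})
    (hmono : MonoSF m {s : Set T | MeasurableSet s})
    (F : Finset (Set T))
    (hatoms : ∀ A ∈ F, IsAtomOf m {s : Set T | MeasurableSet s} A)
    (hdisj : (F : Set (Set T)).PairwiseDisjoint id)
    (hcover : ⋃₀ (F : Set (Set T)) = Set.univ)
    (f : T → ℝ) (hf : Measurable f) (hbdd : ∃ M : ℝ, ∀ t : T, |f t| ≤ M) :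
    GouldIntegrableOn m {s : Set T | MeasurableSet s} f Set.univ ∧
    TotallyMeasurableOn m {s : Set T | MeasurableSet s} f Set.univ := by
  classical
  obtain ⟨M, hM⟩ := hbdd
  have hFmeas : ∀ A ∈ F, MeasurableSet A := fun A hA => (hatoms A hA).1
  have hFpos : ∀ A ∈ F, 0 < m A := fun A hA => (hatoms A hA).2.1
  constructor
  · -- Gould integrability
    refine ⟨∑ A ∈ F, m A * essVal m f A, ?_⟩
    intro ε hε
    set S := ∑ A ∈ F, m A with hSdef
    have hS0 : 0 ≤ S := Finset.sum_nonneg (fun A hA => (hFpos A hA).le)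
    set δ := ε / (S + 1) with hδdef
    have hδ : 0 < δ := div_pos hε (by linarith)
    have hGp := fun A (hA : A ∈ F) =>
      Gset_props m h0 hpos hnull hmono (hatoms A hA) hf hM hδ
    set P₀ : Finset (Set T) := F.image (Gset m f δ) ∪
      (F.image (fun A => A \ Gset m f δ A)).filter (fun s => s.Nonempty) with hP₀def
    have hP₀mem : ∀ C ∈ P₀, ∃ A ∈ F,
        (C = Gset m f δ A ∨ C = A \ Gset m f δ A) ∧ C.Nonempty := by
      intro C hC
      rw [hP₀def, Finset.mem_union] at hC
      rcases hC with hC | hC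
      · obtain ⟨A, hA, rfl⟩ := Finset.mem_image.mp hC
        exact ⟨A, hA, Or.inl rfl, (hGp A hA).2.1⟩
      · obtain ⟨hC', hne⟩ := Finset.mem_filter.mp hC
        obtain ⟨A, hA, rfl⟩ := Finset.mem_image.mp hC'
        exact ⟨A, hA, Or.inr rfl, hne⟩
    have hP₀sub : ∀ C ∈ P₀, ∀ A ∈ F,
        (C = Gset m f δ A ∨ C = A \ Gset m f δ A) → C ⊆ A := by
      rintro C hC A hA (rfl | rfl)
      · exact Gset_subset m f δ A
      · exact Set.diff_subset
    have hP₀part : IsPartitionOf {s : Set T | MeasurableSet s} Set.univ P₀ := by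
      refine ⟨?_, ?_, ?_⟩
      · intro C hC
        obtain ⟨A, hA, hcase, hne⟩ := hP₀mem C hC
        refine ⟨?_, hne, Set.subset_univ _⟩
        rcases hcase with rfl | rfl
        · exact (hGp A hA).1
        · exact (hGp A hA).2.2.2.1
      · intro x hx y hy hxy
        obtain ⟨A, hA, hxc, -⟩ := hP₀mem x (Finset.mem_coe.mp hx)
        obtain ⟨A', hA', hyc, -⟩ := hP₀mem y (Finset.mem_coe.mp hy)
        by_cases hAA : A = A'
        · subst hAA
          rcases hxc with rfl | rfl <;> rcases hyc with rfl | rfl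
          · exact absurd rfl hxy
          · exact Set.disjoint_sdiff_right
          · exact Set.disjoint_sdiff_left
          · exact absurd rfl hxy
        · exact (hdisj hA hA' hAA).mono
            (hP₀sub x (Finset.mem_coe.mp hx) A hA hxc)
            (hP₀sub y (Finset.mem_coe.mp hy) A' hA' hyc)
      · apply Set.eq_univ_of_forall
        intro t
        have ht : t ∈ ⋃₀ (F : Set (Set T)) := by rw [hcover]; trivial
        obtain ⟨A, hA, htA⟩ := ht
        by_cases htG : t ∈ Gset m f δ A
        · refine ⟨Gset m f δ A, ?_, htG⟩
          rw [hP₀def]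
          exact Finset.mem_coe.mpr (Finset.mem_union_left _
            (Finset.mem_image.mpr ⟨A, Finset.mem_coe.mp hA, rfl⟩))
        · refine ⟨A \ Gset m f δ A, ?_, ⟨htA, htG⟩⟩
          rw [hP₀def]
          exact Finset.mem_coe.mpr (Finset.mem_union_right _
            (Finset.mem_filter.mpr ⟨Finset.mem_image.mpr ⟨A, Finset.mem_coe.mp hA, rfl⟩,
              ⟨t, htA, htG⟩⟩))
    refine ⟨P₀, hP₀part, ?_⟩
    intro P hP href τ hτ
    have hPatom : ∀ B ∈ P, ∃ A ∈ F, B ⊆ A := by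
      intro B hB
      obtain ⟨C, hC, hBC⟩ := href B hB
      obtain ⟨A, hA, hcase, -⟩ := hP₀mem C hC
      exact ⟨A, hA, hBC.trans (hP₀sub C hC A hA hcase)⟩
    have hatomuniq : ∀ B ∈ P, ∀ A ∈ F, ∀ A' ∈ F, B ⊆ A → B ⊆ A' → A = A' := by
      intro B hB A hA A' hA' h1 h2
      by_contra hne
      obtain ⟨t, ht⟩ := (hP.1 B hB).2.1
      exact Set.disjoint_left.mp (hdisj hA hA' hne) (h1 ht) (h2 ht)
    have hsplit : P = F.biUnion (fun A => P.filter (fun B => B ⊆ A)) := by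
      ext B
      simp only [Finset.mem_biUnion, Finset.mem_filter]
      constructor
      · intro hB
        obtain ⟨A, hA, hBA⟩ := hPatom B hB
        exact ⟨A, hA, hB, hBA⟩
      · rintro ⟨A, hA, hB, -⟩; exact hB
    have hfdisj : (F : Set (Set T)).PairwiseDisjoint
        (fun A => P.filter (fun B => B ⊆ A)) := by
      intro A hA A' hA' hne
      simp only [Function.onFun, Finset.disjoint_left, Finset.mem_filter]
      rintro B ⟨hBP, hBA⟩ ⟨-, hBA'⟩
      exact hne (hatomuniq B hBP A (Finset.mem_coe.mp hA) A' (Finset.mem_coe.mp hA') hBA hBA')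
    have hkey : ∀ A ∈ F,
        |(∑ B ∈ P.filter (fun B => B ⊆ A), m B • f (τ B)) - m A * essVal m f A| ≤ m A * δ := by
      intro A hA
      have hQmeas : ∀ B ∈ P.filter (fun B => B ⊆ A), MeasurableSet B := fun B hB =>
        (hP.1 B (Finset.mem_filter.mp hB).1).1
      have hQsub : ∀ B ∈ P.filter (fun B => B ⊆ A), B ⊆ A := fun B hB =>
        (Finset.mem_filter.mp hB).2
      have hQdisj : ((P.filter (fun B => B ⊆ A) : Finset (Set T)) :
          Set (Set T)).PairwiseDisjoint id := by
        apply hP.2.1.subset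
        intro B hB
        exact Finset.mem_coe.mpr (Finset.mem_filter.mp (Finset.mem_coe.mp hB)).1
      have hQcov : ⋃₀ ((P.filter (fun B => B ⊆ A) : Finset (Set T)) : Set (Set T)) = A := by
        apply subset_antisymm
        · rintro t ⟨B, hB, htB⟩
          exact hQsub B (Finset.mem_coe.mp hB) htB
        · intro t htA
          have ht : t ∈ ⋃₀ (P : Set (Set T)) := by rw [hP.2.2]; trivial
          obtain ⟨B, hB, htB⟩ := ht
          obtain ⟨A', hA', hBA'⟩ := hPatom B (Finset.mem_coe.mp hB)
          have hAA : A = A' := by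
            by_contra hne
            exact Set.disjoint_left.mp (hdisj hA hA' hne) htA (hBA' htB)
          refine ⟨B, Finset.mem_coe.mpr (Finset.mem_filter.mpr
            ⟨Finset.mem_coe.mp hB, hAA ▸ hBA'⟩), htB⟩
      obtain ⟨B₀, hB₀Q, hB₀m, hrest⟩ := atom_partition m h0 hpos hnull hmono
        (hatoms A hA) hQmeas hQdisj hQsub hQcov
      have hsum : ∑ B ∈ P.filter (fun B => B ⊆ A), m B • f (τ B) = m B₀ • f (τ B₀) :=
        Finset.sum_eq_single_of_mem B₀ hB₀Q (fun B hB hne => by rw [hrest B hB hne]; simp)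
      have hB₀P : B₀ ∈ P := (Finset.mem_filter.mp hB₀Q).1
      obtain ⟨C, hCP₀, hB₀C⟩ := href B₀ hB₀P
      obtain ⟨A', hA', hcase, hCne⟩ := hP₀mem C hCP₀
      have hCG : C = Gset m f δ A' := by
        rcases hcase with h | h
        · exact h
        · exfalso
          have hCmeas : MeasurableSet C := h ▸ (hGp A' hA').2.2.2.1
          have hCnull : m C = 0 := h ▸ (hGp A' hA').2.2.2.2.1
          have h1 := hmono B₀ ((hP.1 B₀ hB₀P).1) C hCmeas hB₀C
          rw [hCnull, hB₀m] at h1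
          exact absurd h1 (not_le.mpr (hFpos A hA))
      have hAA' : A = A' := hatomuniq B₀ hB₀P A hA A' hA' (hQsub B₀ hB₀Q)
        (hB₀C.trans (hCG ▸ Gset_subset m f δ A'))
      have hτB₀ : τ B₀ ∈ Gset m f δ A := by
        rw [hAA']
        exact (hCG ▸ hB₀C) (hτ B₀ hB₀P)
      have habs : |f (τ B₀) - essVal m f A| < δ := (hGp A hA).2.2.2.2.2 _ hτB₀
      rw [hsum, hB₀m, smul_eq_mul,
        show m A * f (τ B₀) - m A * essVal m f A = m A * (f (τ B₀) - essVal m f A) by ring,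
        abs_mul, abs_of_nonneg (hFpos A hA).le]
      exact mul_le_mul_of_nonneg_left habs.le (hFpos A hA).le
    have hPsum : ∑ B ∈ P, m B • f (τ B) =
        ∑ A ∈ F, ∑ B ∈ P.filter (fun B => B ⊆ A), m B • f (τ B) := by
      conv_lhs => rw [hsplit]
      exact Finset.sum_biUnion hfdisj
    rw [Real.norm_eq_abs, hPsum, ← Finset.sum_sub_distrib]
    calc |∑ A ∈ F, ((∑ B ∈ P.filter (fun B => B ⊆ A), m B • f (τ B)) - m A * essVal m f A)|
        ≤ ∑ A ∈ F, |(∑ B ∈ P.filter (fun B => B ⊆ A), m B • f (τ B)) - m A * essVal m f A| :=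
          Finset.abs_sum_le_sum_abs _ _
      _ ≤ ∑ A ∈ F, m A * δ := Finset.sum_le_sum hkey
      _ = S * δ := by rw [← Finset.sum_mul]
      _ < ε := by
          have h1 : (S + 1) * δ = ε := by
            rw [hδdef]; field_simp
          nlinarith
  · -- total measurability
    intro ε hε
    set δ := ε / 2 with hδdef
    have hδ : 0 < δ := by positivity
    have hGp := fun A (hA : A ∈ F) =>
      Gset_props m h0 hpos hnull hmono (hatoms A hA) hf hM hδ
    set A₀ : Set T := ⋃₀ ((F.image (fun A => A \ Gset m f δ A) : Finset (Set T)) :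
      Set (Set T)) with hA₀def
    have hA₀ : MeasurableSet A₀ ∧ m A₀ = 0 := by
      apply null_sUnion m h0 hnull
      intro B hB
      obtain ⟨A, hA, rfl⟩ := Finset.mem_image.mp hB
      exact ⟨(hGp A hA).2.2.2.1, (hGp A hA).2.2.2.2.1⟩
    refine ⟨A₀, F.image (Gset m f δ), hA₀.1, Set.subset_univ _, ?_, ?_, ?_, ?_, ?_⟩
    · intro C hC
      obtain ⟨A, hA, rfl⟩ := Finset.mem_image.mp hC
      exact ⟨(hGp A hA).1, (hGp A hA).2.1, Set.subset_univ _⟩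
    · intro x hx y hy hxy
      have hdisjA₀G : ∀ A ∈ F, Disjoint A₀ (Gset m f δ A) := by
        intro A hA
        rw [hA₀def, Set.disjoint_sUnion_left]
        intro N hN
        obtain ⟨A', hA', rfl⟩ := Finset.mem_image.mp (Finset.mem_coe.mp hN)
        by_cases hAA : A' = A
        · subst hAA; exact Set.disjoint_sdiff_left
        · exact (hdisj hA' hA hAA).mono Set.diff_subset (Gset_subset m f δ A)
      rw [Set.mem_insert_iff] at hx hy
      rcases hx with rfl | hx
      · rcases hy with rfl | hy
        · exact absurd rfl hxy
        · obtain ⟨A, hA, rfl⟩ := Finset.mem_image.mp (Finset.mem_coe.mp hy)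
          exact hdisjA₀G A hA
      · rcases hy with rfl | hy
        · obtain ⟨A, hA, rfl⟩ := Finset.mem_image.mp (Finset.mem_coe.mp hx)
          exact (hdisjA₀G A hA).symm
        · obtain ⟨A, hA, rfl⟩ := Finset.mem_image.mp (Finset.mem_coe.mp hx)
          obtain ⟨A', hA', rfl⟩ := Finset.mem_image.mp (Finset.mem_coe.mp hy)
          have hAA : A ≠ A' := fun h => hxy (by rw [h])
          exact (hdisj hA hA' hAA).mono (Gset_subset m f δ A) (Gset_subset m f δ A')
    · apply Set.eq_univ_of_forall
      intro t
      have ht : t ∈ ⋃₀ (F : Set (Set T)) := by rw [hcover]; trivial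
      obtain ⟨A, hA, htA⟩ := ht
      by_cases htG : t ∈ Gset m f δ A
      · exact Or.inr ⟨Gset m f δ A,
          Finset.mem_coe.mpr (Finset.mem_image.mpr ⟨A, Finset.mem_coe.mp hA, rfl⟩), htG⟩
      · exact Or.inl ⟨A \ Gset m f δ A,
          Finset.mem_coe.mpr (Finset.mem_image.mpr ⟨A, Finset.mem_coe.mp hA, rfl⟩),
          ⟨htA, htG⟩⟩
    · have hvar : variationSF m {s : Set T | MeasurableSet s} A₀ = 0 := by
        apply le_antisymm _ zero_le
        rw [variationSF]
        apply iSup₂_le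
        intro F'' hF''
        have hz : ∀ C ∈ F'', ENNReal.ofReal (m C) = 0 := by
          intro C hC
          have hCm : MeasurableSet C := (hF''.1 C hC).1
          have hCsub : C ⊆ A₀ := (hF''.1 C hC).2
          have h1 := hmono C hCm A₀ hA₀.1 hCsub
          have h2 := hpos C hCm
          rw [hA₀.2] at h1
          have : m C = 0 := le_antisymm h1 h2
          rw [this]; simp
        rw [Finset.sum_congr rfl hz]
        simp
      rw [hvar]
      exact ENNReal.ofReal_pos.mpr hε
    · intro C hC t ht s hs
      obtain ⟨A, hA, rfl⟩ := Finset.mem_image.mp hC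
      have h1 := (hGp A hA).2.2.2.2.2 t ht
      have h2 := (hGp A hA).2.2.2.2.2 s hs
      rw [Real.norm_eq_abs]
      have h3 : |f t - f s| ≤ |f t - essVal m f A| + |essVal m f A - f s| := abs_sub_le _ _ _
      rw [abs_sub_comm (essVal m f A) (f s)] at h3
      rw [hδdef] at h1 h2
      linarith
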